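/- Consider a discrete-time queue Q(t+1) = Q(t) − γ(t) + α(t) with Q(t) ≥ 0 for all t and Q(0) = 0. If Q is strongly stable (i.e., lim sup_{t→∞} (1/t) Σ_{τ=0}^{t−1} E[Q(τ)] < ∞) and arrivals α(t) are uniformly bounded, then the long-run average arrival rate is at most the long-run average service rate: lim sup_{t→∞} (1/t) Σ_{τ=0}^{t−1} E[α(τ) − γ(τ)] ≤ 0. -/

import Mathlib

open MeasureTheory Filter

/-- Necessity direction of queue stability: for a nonnegative queue with linear dynamics
`Q(t+1) = Q(t) - γ(t) + α(t)`, strong stability and uniformly bounded arrivals imply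
that the average arrival rate is at most the average service rate. -/
theorem stmt2 {Ω : Type*} [MeasurableSpace Ω] (P : Measure Ω) [IsProbabilityMeasure P]
    (α γ Q : ℕ → Ω → ℝ)
    (hα0 : ∀ t ω, 0 ≤ α t ω) (hγ0 : ∀ t ω, 0 ≤ γ t ω)
    (hαint : ∀ t, Integrable (α t) P) (hγint : ∀ t, Integrable (γ t) P)
    (hQint : ∀ t, Integrable (Q t) P)
    (hQpos : ∀ t ω, 0 ≤ Q t ω)
    (hQ0 : ∀ ω, Q 0 ω = 0)
    (hQrec : ∀ t ω, Q (t + 1) ω = Q t ω - γ t ω + α t ω)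
    (Amax : ℝ) (hαb : ∀ t ω, α t ω ≤ Amax)
    (hstable : Filter.limsup
      (fun t : ℕ => ENNReal.ofReal ((1 / (t : ℝ)) * ∑ τ ∈ Finset.range t, ∫ ω, Q τ ω ∂P))
      atTop < ⊤) :
    Filter.limsup
      (fun t : ℕ => (1 / (t : ℝ)) * ∑ τ ∈ Finset.range t, ∫ ω, (α τ ω - γ τ ω) ∂P)
      atTop ≤ 0 := by
  classical
  set a : ℕ → ℝ := fun t => ∫ ω, Q t ω ∂P with ha
  -- basic facts about `a`
  have ha0 : ∀ t, 0 ≤ a t := fun t =>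
    integral_nonneg (fun ω => hQpos t ω)
  have haz : a 0 = 0 := by
    simp [ha, hQ0]
  set A : ℝ := max Amax 1 with hA
  have hApos : (0 : ℝ) < A := lt_of_lt_of_le one_pos (le_max_right _ _)
  -- step growth bound : a (t+1) ≤ a t + A
  have hstep : ∀ t, a (t + 1) ≤ a t + A := by
    intro t
    have hmono : ∀ ω, Q (t + 1) ω ≤ Q t ω + A := by
      intro ω
      have := hQrec t ω
      have h1 : α t ω ≤ A := le_trans (hαb t ω) (le_max_left _ _)
      have h2 : 0 ≤ γ t ω := hγ0 t ω
      linarith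
    have hint : Integrable (fun ω => Q t ω + A) P :=
      (hQint t).add (integrable_const A)
    calc a (t + 1) ≤ ∫ ω, (Q t ω + A) ∂P :=
          integral_mono (hQint (t + 1)) hint hmono
      _ = a t + A := by
          rw [integral_add (hQint t) (integrable_const A)]
          simp [ha]
  -- growth over several steps
  have hgrow : ∀ s n, a (s + n) ≤ a s + A * n := by
    intro s n
    induction n with
    | zero => simp
    | succ n ih =>
        have := hstep (s + n)
        have : a (s + (n+1)) ≤ a s + A * n + A := by
          rw [show s + (n+1) = (s + n) + 1 from rfl]
          exact le_trans (hstep (s+n)) (by linarith)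
        push_cast
        push_cast at this
        linarith
  -- lower bound for earlier terms
  have hback : ∀ s t, s ≤ t → a t - A * (t - s : ℕ) ≤ a s := by
    intro s t hst
    obtain ⟨n, rfl⟩ := Nat.exists_eq_add_of_le hst
    have := hgrow s n
    simp only [Nat.add_sub_cancel_left]
    linarith
  -- the sequence in the goal equals a t / t
  have hsum : ∀ t : ℕ, ∑ τ ∈ Finset.range t, ∫ ω, (α τ ω - γ τ ω) ∂P = a t := by
    intro t
    have hterm : ∀ τ, ∫ ω, (α τ ω - γ τ ω) ∂P = a (τ + 1) - a τ := by
      intro τ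
      have : a (τ + 1) = a τ - (∫ ω, γ τ ω ∂P) + ∫ ω, α τ ω ∂P := by
        simp only [ha]
        calc ∫ ω, Q (τ+1) ω ∂P = ∫ ω, (Q τ ω - γ τ ω + α τ ω) ∂P := by
              congr 1; ext ω; exact hQrec τ ω
          _ = (∫ ω, (Q τ ω - γ τ ω) ∂P) + ∫ ω, α τ ω ∂P :=
              integral_add ((hQint τ).sub (hγint τ)) (hαint τ)
          _ = (∫ ω, Q τ ω ∂P) - (∫ ω, γ τ ω ∂P) + ∫ ω, α τ ω ∂P := by
              rw [integral_sub (hQint τ) (hγint τ)]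
      rw [integral_sub (hαint τ) (hγint τ)]
      linarith
    calc ∑ τ ∈ Finset.range t, ∫ ω, (α τ ω - γ τ ω) ∂P
        = ∑ τ ∈ Finset.range t, (a (τ+1) - a τ) := by
          exact Finset.sum_congr rfl (fun τ _ => hterm τ)
      _ = a t - a 0 := Finset.sum_range_sub a t
      _ = a t := by rw [haz]; ring
  have hfun : (fun t : ℕ => (1 / (t : ℝ)) * ∑ τ ∈ Finset.range t, ∫ ω, (α τ ω - γ τ ω) ∂P)
      = fun t : ℕ => (1 / (t : ℝ)) * a t := by
    funext t; rw [hsum]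
  rw [hfun]
  -- extract a uniform bound M on the averages
  obtain ⟨b, hb1, hb2⟩ := exists_between hstable
  have hbne : b ≠ ⊤ := hb2.ne
  set M : ℝ := b.toReal with hMdef
  obtain ⟨N, hN⟩ : ∃ N : ℕ, ∀ t ≥ N,
      (1 / (t : ℝ)) * ∑ τ ∈ Finset.range t, a τ ≤ M := by
    have hev := eventually_lt_of_limsup_lt hb1
    rw [eventually_atTop] at hev
    obtain ⟨N, hN⟩ := hev
    exact ⟨N, fun t ht => (ENNReal.ofReal_le_iff_le_toReal hbne).mp (hN t ht).le⟩
  have hM0 : 0 ≤ M := ENNReal.toReal_nonneg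
  -- key step: eventually a t / t ≤ ε, for every ε > 0
  have key : ∀ ε : ℝ, 0 < ε → ∀ᶠ t : ℕ in atTop, (1 / (t : ℝ)) * a t ≤ ε := by
    intro ε hε
    obtain ⟨K, hK⟩ := exists_nat_gt (2 * M / ε)
    have hKM : M < K * ε / 2 := by
      rw [div_lt_iff₀ hε] at hK
      linarith
    obtain ⟨T, hT⟩ := exists_nat_gt (2 * A * K / ε)
    rw [eventually_atTop]
    refine ⟨max (max N T) K + 1, fun t ht => ?_⟩
    have htN : N ≤ t := le_trans (le_trans (le_max_left _ _) (le_max_left _ _))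
      (le_trans (Nat.le_succ _) ht)
    have htT : (T : ℝ) ≤ t := by
      exact_mod_cast le_trans (le_trans (le_max_right _ _) (le_max_left _ _))
        (le_trans (Nat.le_succ _) ht)
    have htK : K ≤ t := le_trans (le_max_right _ _) (le_trans (Nat.le_succ _) ht)
    have ht1 : 1 ≤ t := le_trans (Nat.le_add_left _ _) ht
    have htpos : (0 : ℝ) < t := by exact_mod_cast ht1
    by_contra hcon
    push_neg at hcon
    have hat : ε * t < a t := by
      have h := mul_lt_mul_of_pos_right hcon htpos
      have h2 : (1 / (t : ℝ) * a t) * t = a t := by field_simp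
      linarith
    have htAK : 2 * A * K / ε < (t : ℝ) := lt_of_lt_of_le hT htT
    have hAK : A * K ≤ ε * t / 2 := by
      rw [div_lt_iff₀ hε] at htAK
      nlinarith
    -- every index in the window [t-K, t) has a large value
    have hwin : ∀ s ∈ Finset.Ico (t - K) t, ε * t / 2 ≤ a s := by
      intro s hs
      rw [Finset.mem_Ico] at hs
      have hs1 : s ≤ t := hs.2.le
      have hts : t - s ≤ K := by omega
      have h1 := hback s t hs1
      have h2 : ((t - s : ℕ) : ℝ) ≤ (K : ℝ) := by exact_mod_cast hts
      nlinarith [hApos.le]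
    -- sum lower bound
    have hsub : Finset.Ico (t - K) t ⊆ Finset.range t := by
      intro s hs
      rw [Finset.mem_Ico] at hs
      exact Finset.mem_range.mpr hs.2
    have hcard : (Finset.Ico (t - K) t).card = K := by
      rw [Nat.card_Ico]
      omega
    have hsum1 : (K : ℝ) * (ε * t / 2) ≤ ∑ τ ∈ Finset.Ico (t - K) t, a τ := by
      calc (K : ℝ) * (ε * t / 2)
          = ∑ _τ ∈ Finset.Ico (t - K) t, (ε * t / 2) := by
            rw [Finset.sum_const, hcard, nsmul_eq_mul]
        _ ≤ ∑ τ ∈ Finset.Ico (t - K) t, a τ := Finset.sum_le_sum hwin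
    have hsum2 : ∑ τ ∈ Finset.Ico (t - K) t, a τ ≤ ∑ τ ∈ Finset.range t, a τ :=
      Finset.sum_le_sum_of_subset_of_nonneg hsub (fun τ _ _ => ha0 τ)
    have havgt := hN t htN
    have hfinal : (K : ℝ) * ε / 2 ≤ M := by
      have h3 : (K : ℝ) * (ε * t / 2) ≤ ∑ τ ∈ Finset.range t, a τ :=
        le_trans hsum1 hsum2
      have h4 : (1 / (t : ℝ)) * ((K : ℝ) * (ε * t / 2))
          ≤ (1 / (t : ℝ)) * ∑ τ ∈ Finset.range t, a τ :=
        mul_le_mul_of_nonneg_left h3 (by positivity)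
      have h5 : (1 / (t : ℝ)) * ((K : ℝ) * (ε * t / 2)) = (K : ℝ) * ε / 2 := by
        field_simp
      linarith
    linarith
  -- conclude
  have hcobdd : IsCoboundedUnder (· ≤ ·) atTop (fun t : ℕ => (1 / (t : ℝ)) * a t) :=
    isCoboundedUnder_le_of_le atTop (x := 0)
      (fun t => mul_nonneg (by positivity) (ha0 t))
  refine le_of_forall_pos_le_add fun ε hε => ?_
  have := limsup_le_of_le hcobdd (key ε hε)
  simpa using this
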